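/- Let n, ω be integers with n ≥ 3 and ω + 2 ≤ (n-2)/2, and suppose ω = 3. Then there exists a real number c such that for k = 1 (the only index with 1 ≤ k ≤ ⌊ω/2⌋), (d_1/(2(n-2)))·c² - (n-2)·c + (n-2)·u_1/(2ν_1²) < 0, where ν_1 = ω(n+ω-2) = 3(n+1), u_1 = ((n-3)/(4(n-2)) - ((n-1)²+(n-1)·25)/(4(n-2)(ν_1-n+1)))·ν_1, and d_1 = 4[(n-1)(n-2)ν_1 - n(n-2)² + 25(n²+n+2)]. -/

import Mathlib

noncomputable section

/-- `ν_k = (ω - 2k + 2)(n + ω - 2k)` as a real number. -/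
def nu (n ω k : ℤ) : ℝ := ((ω : ℝ) - 2 * k + 2) * ((n : ℝ) + ω - 2 * k)

/-- `u_k` from the paper. -/
def uCoeff (n ω k : ℤ) : ℝ :=
  (((n : ℝ) - 3) / (4 * ((n : ℝ) - 2)) -
      (((n : ℝ) - 1) ^ 2 + ((n : ℝ) - 1) * ((ω : ℝ) + 2) ^ 2) /
        (4 * ((n : ℝ) - 2) * (nu n ω k - n + 1))) * nu n ω k

/-- `d_k` from the paper. -/
def dCoeff (n ω k : ℤ) : ℝ :=
  4 * (((n : ℝ) - 1) * ((n : ℝ) - 2) * nu n ω k - (n : ℝ) * ((n : ℝ) - 2) ^ 2 +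
    ((ω : ℝ) + 2) ^ 2 * ((n : ℝ) ^ 2 + n + 2))

/-- The discriminant `Δ_k = (n-2)² - d_k u_k / ν_k²`. -/
def disc (n ω k : ℤ) : ℝ := ((n : ℝ) - 2) ^ 2 - dCoeff n ω k * uCoeff n ω k / nu n ω k ^ 2

/-- The smaller root `x_k`. -/
def xRoot (n ω k : ℤ) : ℝ :=
  (((n : ℝ) - 2) ^ 2 - ((n : ℝ) - 2) * Real.sqrt (disc n ω k)) / dCoeff n ω k

/-- The larger root `y_k`. -/
def yRoot (n ω k : ℤ) : ℝ :=
  (((n : ℝ) - 2) ^ 2 + ((n : ℝ) - 2) * Real.sqrt (disc n ω k)) / dCoeff n ω k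

end

theorem omega_three_case (n : ℤ) (hn : 3 ≤ n) (hωn : 2 * ((3 : ℤ) + 2) ≤ n - 2) :
    ∃ c : ℝ,
      dCoeff n 3 1 / (2 * ((n : ℝ) - 2)) * c ^ 2 - ((n : ℝ) - 2) * c +
        ((n : ℝ) - 2) * uCoeff n 3 1 / (2 * nu n 3 1 ^ 2) < 0 := by
  have hN : (12:ℝ) ≤ (n:ℝ) := by exact_mod_cast (by linarith : (12:ℤ) ≤ n)
  set N := (n:ℝ) with hNdef
  have hnu : nu n 3 1 = 3 * (N + 1) := by simp [nu, hNdef]; ring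
  have hd : dCoeff n 3 1 =
      4 * (3 * (N - 1) * (N - 2) * (N + 1) - N * (N - 2) ^ 2 + 25 * (N ^ 2 + N + 2)) := by
    rw [dCoeff, hnu]; push_cast; ring
  have hu : uCoeff n 3 1 = 3 * (N + 1) * (N ^ 2 - 25 * N + 12) / (4 * (N - 2) * (2 * N + 4)) := by
    rw [uCoeff, hnu]
    have h1 : 3 * (N + 1) - N + 1 = 2 * N + 4 := by ring
    push_cast
    rw [h1]
    have h2 : N - 2 ≠ 0 := by intro h; nlinarith
    have h3 : 2 * N + 4 ≠ 0 := by intro h; nlinarith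
    have h2' : (n:ℝ) - 2 ≠ 0 := h2
    field_simp
    ring
  have hdpos : 0 < dCoeff n 3 1 := by rw [hd]; nlinarith
  refine ⟨(N - 2) ^ 2 / dCoeff n 3 1, ?_⟩
  rw [hu, hnu, hd]
  have h2 : (0:ℝ) < N - 2 := by linarith
  have h3 : (0:ℝ) < 2 * N + 4 := by linarith
  have h4 : (0:ℝ) < N + 1 := by linarith
  rw [hd] at hdpos
  have key : 4 * (3 * (N - 1) * (N - 2) * (N + 1) - N * (N - 2) ^ 2 + 25 * (N ^ 2 + N + 2)) /
        (2 * (N - 2)) * ((N - 2) ^ 2 /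
          (4 * (3 * (N - 1) * (N - 2) * (N + 1) - N * (N - 2) ^ 2 + 25 * (N ^ 2 + N + 2)))) ^ 2
      - (N - 2) * ((N - 2) ^ 2 /
          (4 * (3 * (N - 1) * (N - 2) * (N + 1) - N * (N - 2) ^ 2 + 25 * (N ^ 2 + N + 2))))
      + (N - 2) * (3 * (N + 1) * (N ^ 2 - 25 * N + 12) / (4 * (N - 2) * (2 * N + 4))) /
          (2 * (3 * (N + 1)) ^ 2)
      = ((N ^ 2 - 25 * N + 12) *
            (4 * (3 * (N - 1) * (N - 2) * (N + 1) - N * (N - 2) ^ 2 + 25 * (N ^ 2 + N + 2)))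
          - 24 * (N + 2) * (N + 1) * (N - 2) ^ 3) /
        (24 * (2 * N + 4) * (N + 1) *
          (4 * (3 * (N - 1) * (N - 2) * (N + 1) - N * (N - 2) ^ 2 + 25 * (N ^ 2 + N + 2)))) := by
    have hD : 4 * (3 * (N - 1) * (N - 2) * (N + 1) - N * (N - 2) ^ 2 + 25 * (N ^ 2 + N + 2)) ≠ 0 := ne_of_gt hdpos
    generalize 4 * (3 * (N - 1) * (N - 2) * (N + 1) - N * (N - 2) ^ 2 + 25 * (N ^ 2 + N + 2)) = D at hD ⊢
    field_simp
    ring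
  rw [key]
  apply div_neg_of_neg_of_pos
  · nlinarith [sq_nonneg N, sq_nonneg (N - 12), pow_pos (show (0:ℝ) < N by linarith) 3,
      pow_pos (show (0:ℝ) < N by linarith) 4, pow_pos (show (0:ℝ) < N by linarith) 5]
  · positivity
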